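/- Let x_1, …, x_n and y_1, …, y_n be 2n pairwise distinct vertices of the hypercube graph Q_n forming a ladder: x_1 is the all-zero vertex, y_n is the all-one vertex, there is a fixed coordinate k such that for every i ∈ {1, …, n} the vertices x_i and y_i are adjacent and differ in coordinate k, and for every i ∈ {1, …, n−1} the pairs (x_i, x_{i+1}) and (y_i, y_{i+1}) are edges of Q_n. Then for every i ∈ {1, …, n−1} the edges (x_i, x_{i+1}) and (y_i, y_{i+1}) have the same type, and every type j ∈ {1, …, n} with j ≠ k appears as the type of exactly one pair of opposite edges (x_i, x_{i+1}) and (y_i, y_{i+1}). -/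

import Mathlib

/-- The hypercube graph `Q_n`: vertices are functions `Fin n → Bool`, adjacent iff they
differ in exactly one coordinate. -/
def hypercubeGraph (n : ℕ) : SimpleGraph (Fin n → Bool) where
  Adj x y := ∃! i : Fin n, x i ≠ y i
  symm := by
    constructor
    rintro x y ⟨i, hi, hu⟩
    exact ⟨i, fun h => hi h.symm, fun j hj => hu j fun h => hj h.symm⟩
  loopless := by constructor; rintro x ⟨i, hi, -⟩; exact hi rfl

private lemma boolHelp : ∀ a b c d : Bool, (a ≠ b ↔ c ≠ d) → (a ≠ c ↔ b ≠ d) := by decide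

private lemma flipExists (f : ℕ → Bool) :
    ∀ m, f 0 = false → f m = true → ∃ i < m, f i ≠ f (i + 1) := by
  intro m
  induction m with
  | zero => intro h0 h1; rw [h0] at h1; exact absurd h1 (by simp)
  | succ m ih =>
    intro h0 h1
    by_cases hm : f m = f (m + 1)
    · obtain ⟨i, hi, hf⟩ := ih h0 (hm.trans h1)
      exact ⟨i, Nat.lt_succ_of_lt hi, hf⟩
    · exact ⟨m, Nat.lt_succ_self m, hm⟩

/-- **Theorem.** Let `x 0, …, x (n-1)` and `y 0, …, y (n-1)` be `2n` pairwise distinct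
vertices of `Q_n` forming a ladder: `x 0` is the all-zero vertex, `y (n-1)` is the all-one
vertex, for every `i < n` the vertices `x i` and `y i` are adjacent and differ in the fixed
coordinate `k`, and consecutive `x`'s resp. `y`'s are adjacent. Then opposite rung-to-rung
edges `(x i, x (i+1))` and `(y i, y (i+1))` have the same type, and every type `j ≠ k`
appears as the type of exactly one such pair of opposite edges. -/
theorem hypercube_ladder_types (n : ℕ) (hn : 1 ≤ n) (k : Fin n)
    (x y : ℕ → (Fin n → Bool))
    (hxinj : ∀ i < n, ∀ j < n, x i = x j → i = j)
    (hyinj : ∀ i < n, ∀ j < n, y i = y j → i = j)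
    (hxy : ∀ i < n, ∀ j < n, x i ≠ y j)
    (hx0 : x 0 = fun _ => false)
    (hyn : y (n - 1) = fun _ => true)
    (hrung : ∀ i < n, (hypercubeGraph n).Adj (x i) (y i) ∧ x i k ≠ y i k)
    (hxadj : ∀ i, i + 1 < n → (hypercubeGraph n).Adj (x i) (x (i + 1)))
    (hyadj : ∀ i, i + 1 < n → (hypercubeGraph n).Adj (y i) (y (i + 1))) :
    (∀ i, i + 1 < n → ∀ j : Fin n, (x i j ≠ x (i + 1) j ↔ y i j ≠ y (i + 1) j)) ∧
    (∀ j : Fin n, j ≠ k → ∃! i : ℕ, i + 1 < n ∧ x i j ≠ x (i + 1) j) := by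
  classical
  have rung : ∀ i < n, ∀ j : Fin n, (x i j ≠ y i j ↔ j = k) := by
    intro i hi j
    obtain ⟨⟨c, hc, hu⟩, hk⟩ := hrung i hi
    constructor
    · intro h; rw [hu j h, hu k hk]
    · intro h; subst h; exact hk
  have part1 : ∀ i, i + 1 < n → ∀ j : Fin n,
      (x i j ≠ x (i + 1) j ↔ y i j ≠ y (i + 1) j) := by
    intro i hi j
    have h1 := rung i (Nat.lt_of_succ_lt hi) j
    have h2 := rung (i + 1) hi j
    exact boolHelp _ _ _ _ (h1.trans h2.symm)
  refine ⟨part1, ?_⟩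
  set m := n - 1 with hm
  have hmn : m + 1 = n := Nat.succ_pred_eq_of_pos hn
  have hxm : ∀ j : Fin n, j ≠ k → x m j = true := by
    intro j hj
    have hr := rung m (by omega) j
    have hxy' : x m j = y m j := by
      by_contra h; exact hj (hr.mp h)
    rw [hxy', hyn]
  have hlt : ∀ i : Fin m, (i : ℕ) + 1 < n := fun i => by have := i.2; omega
  have edge : ∀ i : Fin m, ∃! c : Fin n, x i c ≠ x ((i : ℕ) + 1) c :=
    fun i => hxadj i (hlt i)
  let d : Fin m → Fin n := fun i => (edge i).choose
  have hd1 : ∀ i : Fin m, x i (d i) ≠ x ((i : ℕ) + 1) (d i) :=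
    fun i => (edge i).choose_spec.1
  have hd2 : ∀ i : Fin m, ∀ j : Fin n, x i j ≠ x ((i : ℕ) + 1) j → j = d i :=
    fun i j hj => (edge i).choose_spec.2 j hj
  have hex : ∀ j : Fin n, j ≠ k → ∃ i : Fin m, d i = j := by
    intro j hj
    have h0 : x 0 j = false := by rw [hx0]
    have h1 : x m j = true := hxm j hj
    obtain ⟨i, hi, hflip⟩ := flipExists (fun t => x t j) m h0 h1
    exact ⟨⟨i, hi⟩, (hd2 ⟨i, hi⟩ j hflip).symm⟩
  have hsub : Finset.univ.erase k ⊆ Finset.image d Finset.univ := by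
    intro j hj
    obtain ⟨i, hi⟩ := hex j (Finset.ne_of_mem_erase hj)
    exact Finset.mem_image.mpr ⟨i, Finset.mem_univ i, hi⟩
  have hcard : (Finset.image d Finset.univ).card = (Finset.univ : Finset (Fin m)).card := by
    have h1 : (Finset.univ.erase k).card = n - 1 := by
      rw [Finset.card_erase_of_mem (Finset.mem_univ k), Finset.card_univ, Fintype.card_fin]
    have h2 := Finset.card_le_card hsub
    have h3 := Finset.card_image_le (f := d) (s := (Finset.univ : Finset (Fin m)))
    simp only [Finset.card_univ, Fintype.card_fin] at h2 h3 ⊢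
    omega
  have hinj : Set.InjOn d ↑(Finset.univ : Finset (Fin m)) := Finset.injOn_of_card_image_eq hcard
  intro j hj
  obtain ⟨i, hi⟩ := hex j hj
  refine ⟨(i : ℕ), ⟨hlt i, hi ▸ hd1 i⟩, ?_⟩
  rintro t ⟨ht, hflip⟩
  have htm : t < m := by omega
  have h1 : d ⟨t, htm⟩ = j := (hd2 ⟨t, htm⟩ j hflip).symm
  have h2 : (⟨t, htm⟩ : Fin m) = i :=
    hinj (Finset.mem_univ _) (Finset.mem_univ _) (h1.trans hi.symm)
  exact congrArg Fin.val h2
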